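/- arXiv:1809.11004 — 2 statements merged into one kernel-verified Lean document; each statement's English description precedes it below -/
import Mathlib

section
/- Let m > 1/2, α ≥ 0 and set C_m = (2m-1)^{-1/2}. Then for all j ∈ ℕ and all measurable f : [0,∞) → ℝ with ∫_0^∞ |f(z)|² ρ_j(z) dz < ∞, one has sup_{y ≥ 0} (ρ_j(y)/ρ_0(y))^{1/2} ∫_0^y |f(z)| dz ≤ C_m (∫_0^∞ |f|² ρ_j)^{1/2}. -/
open MeasureTheory

/-- The weight functions `ρ_j(y) = (1+y)^{2m} ∏_{k=1}^j (1 + y/k^α)^{-2}`. -/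
noncomputable def rho (m α : ℝ) (j : ℕ) (y : ℝ) : ℝ :=
  (1 + y) ^ (2 * m) * ∏ k ∈ Finset.Icc 1 j, ((1 + y / (k : ℝ) ^ α) ^ 2)⁻¹

namespace StmtAux

/-- The product part of `rho`. -/
noncomputable def P (α : ℝ) (j : ℕ) (t : ℝ) : ℝ :=
  ∏ k ∈ Finset.Icc 1 j, ((1 + t / (k : ℝ) ^ α) ^ 2)⁻¹

lemma base_pos {α t : ℝ} (ht : 0 ≤ t) {k : ℕ} (hk : 1 ≤ k) :
    0 < 1 + t / (k : ℝ) ^ α := by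
  have hk' : (0:ℝ) < (k : ℝ) := by exact_mod_cast hk
  have h1 : 0 < (k : ℝ) ^ α := Real.rpow_pos_of_pos hk' α
  positivity

lemma P_pos (α : ℝ) (j : ℕ) {t : ℝ} (ht : 0 ≤ t) : 0 < P α j t := by
  refine Finset.prod_pos fun k hk => ?_
  have := base_pos (α := α) ht (Finset.mem_Icc.mp hk).1
  positivity

lemma P_nonneg (α : ℝ) (j : ℕ) (t : ℝ) : 0 ≤ P α j t := by
  refine Finset.prod_nonneg fun k hk => ?_
  positivity

lemma P_mono (α : ℝ) (j : ℕ) {z y : ℝ} (hz : 0 ≤ z) (hzy : z ≤ y) :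
    P α j y ≤ P α j z := by
  refine Finset.prod_le_prod (fun k hk => by positivity) fun k hk => ?_
  have hk1 := (Finset.mem_Icc.mp hk).1
  have hb := base_pos (α := α) hz hk1
  have hk' : (0:ℝ) < (k : ℝ) := by exact_mod_cast hk1
  have hka : 0 < (k : ℝ) ^ α := Real.rpow_pos_of_pos hk' α
  gcongr

lemma rho_eq (m α : ℝ) (j : ℕ) (t : ℝ) :
    rho m α j t = (1 + t) ^ (2 * m) * P α j t := rfl

lemma rho_zero (m α : ℝ) (t : ℝ) : rho m α 0 t = (1 + t) ^ (2 * m) := by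
  simp [rho]

lemma rho_pos (m α : ℝ) (j : ℕ) {t : ℝ} (ht : 0 ≤ t) : 0 < rho m α j t :=
  mul_pos (Real.rpow_pos_of_pos (by linarith) _) (P_pos α j ht)

lemma measurable_rho (m α : ℝ) (j : ℕ) : Measurable (rho m α j) := by
  apply Measurable.mul
  · fun_prop
  · apply Finset.measurable_prod
    intro k hk
    fun_prop

lemma continuousOn_rho (m α : ℝ) (j : ℕ) {y : ℝ} :
    ContinuousOn (rho m α j) (Set.Icc 0 y) := by
  apply ContinuousOn.mul
  · refine ContinuousOn.rpow_const (continuous_const.add continuous_id).continuousOn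
      fun t ht => Or.inl ?_
    have := ht.1; intro h; linarith [h]
  · apply continuousOn_finset_prod
    intro k hk
    refine ContinuousOn.inv₀ (((continuous_const.add (continuous_id.div_const _)).pow 2).continuousOn)
      fun t ht => ?_
    have := base_pos (α := α) ht.1 (Finset.mem_Icc.mp hk).1
    positivity

lemma int_bound (m : ℝ) (hm : 1/2 < m) {y : ℝ} (hy : 0 ≤ y) :
    ∫ z in Set.Ioc (0:ℝ) y, (1 + z) ^ (-(2*m)) ≤ 1 / (2*m - 1) := by
  have h1 : ∫ z in Set.Ioc (0:ℝ) y, (1 + z) ^ (-(2*m))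
      = ∫ z in (0:ℝ)..y, (1 + z) ^ (-(2*m)) := (intervalIntegral.integral_of_le hy).symm
  rw [h1]
  have h2 : (∫ z in (0:ℝ)..y, (1 + z) ^ (-(2*m)))
      = ∫ u in (1:ℝ)..(1+y), u ^ (-(2*m)) := by
    rw [intervalIntegral.integral_comp_add_left (fun u => u ^ (-(2*m))) 1]
    norm_num
  rw [h2, integral_rpow (Or.inr ⟨by intro h; rw [neg_inj] at h; linarith,
    fun h => by
      rcases Set.mem_uIcc.mp h with ⟨h1, _⟩ | ⟨_, h2⟩ <;> linarith⟩)]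
  rw [Real.one_rpow]
  have hA : 0 ≤ (1 + y) ^ (-(2*m) + 1) := Real.rpow_nonneg (by linarith) _
  have hc : (0:ℝ) < 2*m - 1 := by linarith
  have key : ((1 + y) ^ (-(2*m) + 1) - 1) / (-(2*m) + 1)
      = (1 - (1 + y) ^ (-(2*m) + 1)) / (2*m - 1) := by
    rw [div_eq_div_iff (by linarith) (by linarith)]; ring
  rw [key]
  gcongr
  linarith

end StmtAux

open StmtAux in
theorem stmt3 (m α : ℝ) (hm : 1/2 < m) (hα : 0 ≤ α) (j : ℕ) (f : ℝ → ℝ)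
    (hf : Measurable f)
    (hint : Integrable (fun z => f z ^ 2 * rho m α j z) (volume.restrict (Set.Ioi 0))) :
    ∀ y : ℝ, 0 ≤ y →
      Real.sqrt (rho m α j y / rho m α 0 y) * ∫ z in (0:ℝ)..y, |f z|
        ≤ Real.sqrt (1 / (2 * m - 1)) *
          Real.sqrt (∫ z in Set.Ioi (0:ℝ), f z ^ 2 * rho m α j z) := by
  intro y hy
  set μ := volume.restrict (Set.Ioc (0:ℝ) y) with hμ
  set g : ℝ → ℝ := fun z => |f z| * Real.sqrt (rho m α j z) with hgdef
  set h : ℝ → ℝ := fun z => (Real.sqrt (rho m α j z))⁻¹ with hhdef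
  -- the ratio of the weights
  have hdiv : rho m α j y / rho m α 0 y = P α j y := by
    rw [rho_eq, rho_zero, mul_comm, mul_div_assoc, div_self
      (ne_of_gt (Real.rpow_pos_of_pos (by linarith) _)), mul_one]
  -- integrability of f^2 * rho on Ioc
  have hsub : μ ≤ volume.restrict (Set.Ioi 0) :=
    Measure.restrict_mono Set.Ioc_subset_Ioi_self le_rfl
  have hint' : Integrable (fun z => f z ^ 2 * rho m α j z) μ := hint.mono_measure hsub
  -- integrability of rho⁻¹ on Ioc
  have hwint : IntegrableOn (fun z => (rho m α j z)⁻¹) (Set.Ioc 0 y) := by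
    refine IntegrableOn.mono_set ?_ Set.Ioc_subset_Icc_self
    refine ContinuousOn.integrableOn_Icc ?_
    exact (continuousOn_rho m α j).inv₀ fun t ht => ne_of_gt (rho_pos m α j ht.1)
  -- Memℒp facts
  have hgmeas : Measurable g := hf.abs.mul (measurable_rho m α j).sqrt
  have hhmeas : Measurable h := (measurable_rho m α j).sqrt.inv
  have hg2 : MemLp g (ENNReal.ofReal 2) μ := by
    rw [show ENNReal.ofReal (2:ℝ) = 2 by norm_num]
    rw [memLp_two_iff_integrable_sq hgmeas.aestronglyMeasurable]
    refine hint'.congr ?_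
    refine (ae_restrict_iff' measurableSet_Ioc).mpr (ae_of_all _ fun z hz => ?_)
    have hρ := (rho_pos m α j hz.1.le).le
    simp only [hgdef, mul_pow, sq_abs, Real.sq_sqrt hρ]
  have hh2 : MemLp h (ENNReal.ofReal 2) μ := by
    rw [show ENNReal.ofReal (2:ℝ) = 2 by norm_num]
    rw [memLp_two_iff_integrable_sq hhmeas.aestronglyMeasurable]
    refine hwint.congr ?_
    refine (ae_restrict_iff' measurableSet_Ioc).mpr (ae_of_all _ fun z hz => ?_)
    have hρ := (rho_pos m α j hz.1.le).le
    simp only [hhdef, inv_pow, Real.sq_sqrt hρ]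
  -- Cauchy-Schwarz
  have hpq : Real.HolderConjugate 2 2 := Real.HolderConjugate.two_two
  have CS := integral_mul_le_Lp_mul_Lq_of_nonneg hpq
    (ae_of_all _ fun z => by positivity : 0 ≤ᵐ[μ] g)
    (ae_of_all _ fun z => by positivity : 0 ≤ᵐ[μ] h) hg2 hh2
  -- rewrite the LHS interval integral
  have hLHS : (∫ z in (0:ℝ)..y, |f z|) = ∫ z, g z * h z ∂μ := by
    rw [intervalIntegral.integral_of_le hy]
    refine setIntegral_congr_fun measurableSet_Ioc fun z hz => ?_
    have hρ := rho_pos m α j hz.1.le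
    have hs : Real.sqrt (rho m α j z) ≠ 0 := ne_of_gt (Real.sqrt_pos.mpr hρ)
    simp only [hgdef, hhdef]
    rw [mul_assoc, mul_inv_cancel₀ hs, mul_one]
  -- identify the two factors
  have hfact1 : (∫ z, g z ^ (2:ℝ) ∂μ) = ∫ z in Set.Ioc (0:ℝ) y, f z ^ 2 * rho m α j z := by
    refine setIntegral_congr_fun measurableSet_Ioc fun z hz => ?_
    have hρ := (rho_pos m α j hz.1.le).le
    rw [show (2:ℝ) = ((2:ℕ):ℝ) by norm_num, Real.rpow_natCast]
    simp only [hgdef, mul_pow, sq_abs, Real.sq_sqrt hρ]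
  have hfact2 : (∫ z, h z ^ (2:ℝ) ∂μ) = ∫ z in Set.Ioc (0:ℝ) y, (rho m α j z)⁻¹ := by
    refine setIntegral_congr_fun measurableSet_Ioc fun z hz => ?_
    have hρ := (rho_pos m α j hz.1.le).le
    rw [show (2:ℝ) = ((2:ℕ):ℝ) by norm_num, Real.rpow_natCast]
    simp only [hhdef, inv_pow, Real.sq_sqrt hρ]
  -- bound on the f factor
  have hIf : (∫ z in Set.Ioc (0:ℝ) y, f z ^ 2 * rho m α j z)
      ≤ ∫ z in Set.Ioi (0:ℝ), f z ^ 2 * rho m α j z := by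
    refine setIntegral_mono_set hint ?_ (HasSubset.Subset.eventuallyLE Set.Ioc_subset_Ioi_self)
    refine (ae_restrict_iff' measurableSet_Ioi).mpr (ae_of_all _ fun z hz => ?_)
    have := (rho_pos m α j (le_of_lt hz)).le
    positivity
  -- bound on the weight factor
  have hIw : P α j y * (∫ z in Set.Ioc (0:ℝ) y, (rho m α j z)⁻¹) ≤ 1 / (2*m - 1) := by
    rw [← integral_const_mul]
    refine le_trans (setIntegral_mono_on (hwint.const_mul _) ?_ measurableSet_Ioc
      fun z hz => ?_) (int_bound m hm hy)
    · refine IntegrableOn.mono_set ?_ Set.Ioc_subset_Icc_self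
      refine ContinuousOn.integrableOn_Icc ?_
      refine ContinuousOn.rpow_const (continuous_const.add continuous_id).continuousOn
        fun t ht => Or.inl ?_
      have := ht.1; intro hcon; linarith [hcon]
    · have hz0 : 0 ≤ z := hz.1.le
      have h1z : (0:ℝ) < 1 + z := by linarith
      have hPz := P_pos α j hz0
      have hPy := P_pos α j (le_trans hz0 hz.2)
      have hPm := P_mono α j hz0 hz.2
      rw [rho_eq, mul_inv, ← Real.rpow_neg h1z.le]
      calc P α j y * ((1 + z) ^ (-(2*m)) * (P α j z)⁻¹)
          = (1 + z) ^ (-(2*m)) * (P α j y * (P α j z)⁻¹) := by ring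
        _ ≤ (1 + z) ^ (-(2*m)) * 1 := by
            refine mul_le_mul_of_nonneg_left ?_ (Real.rpow_nonneg h1z.le _)
            rw [← div_eq_mul_inv, div_le_one hPz]; exact hPm
        _ = (1 + z) ^ (-(2*m)) := mul_one _
  -- put everything together
  have hg2nn : 0 ≤ ∫ z, g z ^ (2:ℝ) ∂μ := by
    refine integral_nonneg fun z => ?_
    exact Real.rpow_nonneg (by positivity) _
  have hh2nn : 0 ≤ ∫ z, h z ^ (2:ℝ) ∂μ := by
    refine integral_nonneg fun z => ?_
    exact Real.rpow_nonneg (by positivity) _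
  have hPynn : 0 ≤ P α j y := P_nonneg α j y
  rw [hdiv, hLHS]
  calc Real.sqrt (P α j y) * ∫ z, g z * h z ∂μ
      ≤ Real.sqrt (P α j y) *
        ((∫ z, g z ^ (2:ℝ) ∂μ) ^ (1/(2:ℝ)) * (∫ z, h z ^ (2:ℝ) ∂μ) ^ (1/(2:ℝ))) :=
        mul_le_mul_of_nonneg_left CS (Real.sqrt_nonneg _)
    _ = (∫ z, g z ^ (2:ℝ) ∂μ) ^ (1/(2:ℝ)) *
        (Real.sqrt (P α j y) * (∫ z, h z ^ (2:ℝ) ∂μ) ^ (1/(2:ℝ))) := by ring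
    _ = Real.sqrt (∫ z, g z ^ (2:ℝ) ∂μ) *
        (Real.sqrt (P α j y) * Real.sqrt (∫ z, h z ^ (2:ℝ) ∂μ)) := by
        rw [← Real.sqrt_eq_rpow, ← Real.sqrt_eq_rpow]
    _ = Real.sqrt (∫ z, g z ^ (2:ℝ) ∂μ) *
        Real.sqrt (P α j y * ∫ z, h z ^ (2:ℝ) ∂μ) := by
        rw [Real.sqrt_mul hPynn]
    _ ≤ Real.sqrt (∫ z in Set.Ioi (0:ℝ), f z ^ 2 * rho m α j z) *
        Real.sqrt (1 / (2*m - 1)) := by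
        refine mul_le_mul ?_ ?_ (Real.sqrt_nonneg _) (Real.sqrt_nonneg _)
        · exact Real.sqrt_le_sqrt (by rw [hfact1]; exact hIf)
        · exact Real.sqrt_le_sqrt (by rw [hfact2]; exact hIw)
    _ = Real.sqrt (1 / (2 * m - 1)) *
        Real.sqrt (∫ z in Set.Ioi (0:ℝ), f z ^ 2 * rho m α j z) := mul_comm _ _
end

section
/- Let m > 1/2, α ≥ 0, and let 0 ≤ n ≤ j be integers with n < m - 1/2. Then for all measurable f : [0,∞) → ℝ, sup_{y≥0} (ρ_j(y)/ρ_n(y))^{1/2} ∫_0^y |f(z)| dz ≤ (2(m-n)-1)^{-1/2} (∫_0^∞ |f|² ρ_j)^{1/2}. -/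
open MeasureTheory

lemma factor_pos {α z : ℝ} (hz : 0 ≤ z) {k : ℕ} (hk : 1 ≤ k) :
    0 < 1 + z / (k : ℝ) ^ α := by
  have hk' : (0:ℝ) < (k:ℝ) ^ α := Real.rpow_pos_of_pos (by exact_mod_cast hk) _
  have := div_nonneg hz hk'.le
  linarith

lemma rho_pos (m α : ℝ) (j : ℕ) {z : ℝ} (hz : 0 ≤ z) : 0 < rho m α j z := by
  unfold rho
  apply mul_pos (Real.rpow_pos_of_pos (by linarith) _)
  apply Finset.prod_pos
  intro k hk
  have h := factor_pos (α := α) hz (Finset.mem_Icc.mp hk).1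
  positivity

lemma rho_measurable (m α : ℝ) (j : ℕ) : Measurable (rho m α j) := by
  apply Measurable.mul
  · exact (measurable_const.add measurable_id).pow_const _
  · exact Finset.measurable_prod _ fun k _ =>
      ((measurable_const.add (measurable_id.div_const _)).pow_const 2).inv

lemma rho_continuousOn (m α : ℝ) (j : ℕ) : ContinuousOn (rho m α j) (Set.Ici 0) := by
  apply ContinuousOn.mul
  · apply ContinuousOn.rpow_const (continuousOn_const.add continuousOn_id)
    intro x hx
    left
    have : (0:ℝ) ≤ x := hx
    simp only [Pi.add_apply, id_eq]
    intro h; linarith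
  · apply continuousOn_finset_prod
    intro k hk
    apply ContinuousOn.inv₀
    · exact (continuousOn_const.add (continuousOn_id.div_const _)).pow 2
    · intro x hx
      have h := factor_pos (α := α) (k := k) hx (Finset.mem_Icc.mp hk).1
      positivity

lemma rho_factor (m α : ℝ) {n j : ℕ} (hnj : n ≤ j) (z : ℝ) :
    rho m α j z = rho m α n z * ∏ k ∈ Finset.Ioc n j, ((1 + z / (k : ℝ) ^ α) ^ 2)⁻¹ := by
  unfold rho
  rw [mul_assoc]
  congr 1
  have e : ∀ i : ℕ, Finset.Icc 1 i = Finset.Ioc 0 i := fun i => by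
    rw [← Finset.Icc_add_one_left_eq_Ioc, zero_add]
  rw [e j, e n, ← Finset.prod_Ioc_consecutive _ (Nat.zero_le n) hnj]

lemma ratio_antitone (m α : ℝ) (hα : 0 ≤ α) {n j : ℕ} (hnj : n ≤ j) {z y : ℝ}
    (hz : 0 ≤ z) (hzy : z ≤ y) (hρn : ∀ w, 0 ≤ w → rho m α n w ≠ 0) :
    rho m α j y / rho m α n y ≤ rho m α j z / rho m α n z := by
  have hy : 0 ≤ y := hz.trans hzy
  rw [rho_factor m α hnj y, rho_factor m α hnj z,
    mul_div_cancel_left₀ _ (hρn y hy), mul_div_cancel_left₀ _ (hρn z hz)]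
  apply Finset.prod_le_prod
  · intro k hk
    have hk1 : 1 ≤ k := by have := (Finset.mem_Ioc.mp hk).1; omega
    have h := factor_pos (α := α) hy hk1
    positivity
  · intro k hk
    have hk1 : 1 ≤ k := by have := (Finset.mem_Ioc.mp hk).1; omega
    have hky : (0:ℝ) < (k:ℝ) ^ α := Real.rpow_pos_of_pos (by exact_mod_cast hk1) _
    have hpz := factor_pos (α := α) hz hk1
    have hle : 1 + z / (k:ℝ) ^ α ≤ 1 + y / (k:ℝ) ^ α := by gcongr
    apply inv_anti₀ (by positivity)
    exact pow_le_pow_left₀ hpz.le hle 2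

lemma rho_lower (m α : ℝ) (hα : 0 ≤ α) (n : ℕ) {z : ℝ} (hz : 0 ≤ z) :
    (1 + z) ^ (2 * (m - n)) ≤ rho m α n z := by
  have h1z : (0:ℝ) < 1 + z := by linarith
  have key : ∀ k ∈ Finset.Icc 1 n, (((1 + z) ^ 2)⁻¹ : ℝ) ≤ ((1 + z / (k:ℝ) ^ α) ^ 2)⁻¹ := by
    intro k hk
    have hk1 : 1 ≤ k := (Finset.mem_Icc.mp hk).1
    have hk' : (1:ℝ) ≤ (k:ℝ) ^ α := Real.one_le_rpow (by exact_mod_cast hk1) hα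
    have hpz := factor_pos (α := α) hz hk1
    have hle : 1 + z / (k:ℝ) ^ α ≤ 1 + z := by
      have := div_le_self hz hk'
      linarith
    apply inv_anti₀ (by positivity)
    exact pow_le_pow_left₀ hpz.le hle 2
  have hprod : ((((1 + z) ^ 2)⁻¹ : ℝ)) ^ n ≤ ∏ k ∈ Finset.Icc 1 n, ((1 + z / (k:ℝ) ^ α) ^ 2)⁻¹ := by
    calc ((((1 + z) ^ 2)⁻¹ : ℝ)) ^ n = ∏ _k ∈ Finset.Icc 1 n, (((1 + z) ^ 2)⁻¹ : ℝ) := by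
          rw [Finset.prod_const, Nat.card_Icc]; norm_num
      _ ≤ _ := Finset.prod_le_prod (fun k _ => by positivity) key
  have hmain : (1 + z) ^ (2 * m) * ((((1 + z) ^ 2)⁻¹ : ℝ)) ^ n ≤ rho m α n z := by
    unfold rho
    exact mul_le_mul_of_nonneg_left hprod (Real.rpow_nonneg h1z.le _)
  refine le_trans (le_of_eq ?_) hmain
  have h2 : (((1 + z) ^ 2 : ℝ))⁻¹ = (1 + z) ^ (-2 : ℝ) := by
    rw [← Real.rpow_natCast (1 + z) 2, ← Real.rpow_neg h1z.le]
    norm_num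
  rw [h2, ← Real.rpow_natCast ((1+z) ^ (-2:ℝ)) n, ← Real.rpow_mul h1z.le, ← Real.rpow_add h1z]
  ring_nf

theorem stmt4 (m α : ℝ) (hm : 1/2 < m) (hα : 0 ≤ α) (n j : ℕ) (hnj : n ≤ j)
    (hn : (n : ℝ) < m - 1/2) (f : ℝ → ℝ) (hf : Measurable f)
    (hint : Integrable (fun z => f z ^ 2 * rho m α j z) (volume.restrict (Set.Ioi 0))) :
    ∀ y : ℝ, 0 ≤ y →
      Real.sqrt (rho m α j y / rho m α n y) * ∫ z in (0:ℝ)..y, |f z|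
        ≤ Real.sqrt (1 / (2 * (m - (n : ℝ)) - 1)) *
          Real.sqrt (∫ z in Set.Ioi (0:ℝ), f z ^ 2 * rho m α j z) := by
  intro y hy
  have hC : 0 < 2 * (m - (n:ℝ)) - 1 := by linarith
  set r : ℝ := -(2 * (m - (n:ℝ))) with hr
  have hrlt : r < -1 := by rw [hr]; linarith
  set μ := volume.restrict (Set.Ioc (0:ℝ) y) with hμ
  have hsub : Set.Ioc (0:ℝ) y ⊆ Set.Ioi 0 := Set.Ioc_subset_Ioi_self
  have hμle : μ ≤ volume.restrict (Set.Ioi 0) := Measure.restrict_mono hsub le_rfl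
  have hρmeas := rho_measurable m α j
  -- the two Cauchy-Schwarz factors
  set G : ℝ → ℝ := fun z => |f z| * Real.sqrt (rho m α j z) with hGdef
  set H : ℝ → ℝ := fun z => (Real.sqrt (rho m α j z))⁻¹ with hHdef
  have hGmeas : Measurable G := hf.abs.mul (Real.continuous_sqrt.measurable.comp hρmeas)
  have hHmeas : Measurable H := (Real.continuous_sqrt.measurable.comp hρmeas).inv
  have hae : ∀ᵐ z ∂μ, z ∈ Set.Ioc (0:ℝ) y := self_mem_ae_restrict measurableSet_Ioc
  have hsq_int : Integrable (fun z => f z ^ 2 * rho m α j z) μ := hint.mono_measure hμle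
  have hGsq_eq : ∀ᵐ z ∂μ, G z ^ 2 = f z ^ 2 * rho m α j z := by
    filter_upwards [hae] with z hz
    have hρ := rho_pos m α j hz.1.le
    rw [hGdef]
    simp only []
    rw [mul_pow, sq_abs, Real.sq_sqrt hρ.le]
  have hGsq : Integrable (fun z => G z ^ 2) μ := hsq_int.congr (hGsq_eq.mono fun z h => h.symm)
  have hGmem : MemLp G (ENNReal.ofReal 2) μ := by
    rw [show ENNReal.ofReal 2 = 2 by norm_num]
    exact (memLp_two_iff_integrable_sq hGmeas.aestronglyMeasurable).mpr hGsq
  -- H member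
  have hinv_cont : ContinuousOn (fun z => (rho m α j z)⁻¹) (Set.Icc 0 y) :=
    ((rho_continuousOn m α j).mono Set.Icc_subset_Ici_self).inv₀
      (fun x hx => (rho_pos m α j hx.1).ne')
  have hinv_int : Integrable (fun z => (rho m α j z)⁻¹) μ :=
    (hinv_cont.integrableOn_Icc).mono_set Set.Ioc_subset_Icc_self
  have hHsq_eq : ∀ᵐ z ∂μ, H z ^ 2 = (rho m α j z)⁻¹ := by
    filter_upwards [hae] with z hz
    have hρ := rho_pos m α j hz.1.le
    rw [hHdef]
    simp only []
    rw [inv_pow, Real.sq_sqrt hρ.le]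
  have hHsq : Integrable (fun z => H z ^ 2) μ := hinv_int.congr (hHsq_eq.mono fun z h => h.symm)
  have hHmem : MemLp H (ENNReal.ofReal 2) μ := by
    rw [show ENNReal.ofReal 2 = 2 by norm_num]
    exact (memLp_two_iff_integrable_sq hHmeas.aestronglyMeasurable).mpr hHsq
  have hconj : Real.HolderConjugate 2 2 := ⟨by norm_num, by norm_num, by norm_num⟩
  have holder := integral_mul_le_Lp_mul_Lq_of_nonneg hconj
    (Filter.Eventually.of_forall fun z => mul_nonneg (abs_nonneg _) (Real.sqrt_nonneg _))
    (Filter.Eventually.of_forall fun z => inv_nonneg.mpr (Real.sqrt_nonneg _))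
    hGmem hHmem
  -- rewrite holder
  have e2 : ∀ x : ℝ, x ^ (2:ℝ) = x ^ (2:ℕ) := fun x => by
    rw [show (2:ℝ) = ((2:ℕ):ℝ) by norm_num, Real.rpow_natCast]
  simp only [e2] at holder
  set A' := ∫ z, f z ^ 2 * rho m α j z ∂μ with hA'
  set B := ∫ z, (rho m α j z)⁻¹ ∂μ with hB
  have hGint : ∫ z, G z ^ (2:ℕ) ∂μ = A' := integral_congr_ae hGsq_eq
  have hHint : ∫ z, H z ^ (2:ℕ) ∂μ = B := integral_congr_ae hHsq_eq
  rw [hGint, hHint] at holder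
  have hGH : ∫ z, G z * H z ∂μ = ∫ z, |f z| ∂μ := by
    refine integral_congr_ae ?_
    filter_upwards [hae] with z hz
    have hρ := rho_pos m α j hz.1.le
    have hs : Real.sqrt (rho m α j z) ≠ 0 := (Real.sqrt_pos.mpr hρ).ne'
    rw [hGdef, hHdef]
    simp only []
    field_simp
  rw [hGH] at holder
  -- now bounds
  have hA'0 : 0 ≤ A' := integral_nonneg_of_ae <| by
    filter_upwards [hae] with z hz
    exact mul_nonneg (sq_nonneg _) (rho_pos m α j hz.1.le).le
  have hB0 : 0 ≤ B := integral_nonneg_of_ae <| by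
    filter_upwards [hae] with z hz
    exact inv_nonneg.mpr (rho_pos m α j hz.1.le).le
  set R := rho m α j y / rho m α n y with hR
  have hR0 : 0 ≤ R := div_nonneg (rho_pos m α j hy).le (rho_pos m α n hy).le
  set A := ∫ z in Set.Ioi (0:ℝ), f z ^ 2 * rho m α j z with hA
  have hA'A : A' ≤ A := by
    apply setIntegral_mono_set hint
    · filter_upwards [self_mem_ae_restrict (measurableSet_Ioi : MeasurableSet (Set.Ioi (0:ℝ)))]
        with z hz
      exact mul_nonneg (sq_nonneg _) (rho_pos m α j (le_of_lt hz)).le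
    · exact HasSubset.Subset.eventuallyLE hsub
  -- key bound R * B ≤ C
  have hbound_cont : ContinuousOn (fun z : ℝ => (1 + z) ^ r) (Set.Icc 0 y) := by
    apply ContinuousOn.rpow_const (continuousOn_const.add continuousOn_id)
    intro x hx
    left
    have : (0:ℝ) ≤ x := hx.1
    simp only [Pi.add_apply, id_eq]
    intro h; linarith
  have hbound_int : IntegrableOn (fun z : ℝ => (1 + z) ^ r) (Set.Ioc 0 y) :=
    hbound_cont.integrableOn_Icc.mono_set Set.Ioc_subset_Icc_self
  have hptwise : ∀ z ∈ Set.Ioc (0:ℝ) y, R * (rho m α j z)⁻¹ ≤ (1 + z) ^ r := by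
    intro z hz
    have hz0 : (0:ℝ) ≤ z := hz.1.le
    have hρj := rho_pos m α j hz0
    have hρn := rho_pos m α n hz0
    have h1 : R ≤ rho m α j z / rho m α n z :=
      ratio_antitone m α hα hnj hz0 hz.2 (fun w hw => (rho_pos m α n hw).ne')
    have h2 : R * (rho m α j z)⁻¹ ≤ (rho m α j z / rho m α n z) * (rho m α j z)⁻¹ :=
      mul_le_mul_of_nonneg_right h1 (inv_nonneg.mpr hρj.le)
    have h3 : (rho m α j z / rho m α n z) * (rho m α j z)⁻¹ = (rho m α n z)⁻¹ := by
      field_simp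
    have h4 : (rho m α n z)⁻¹ ≤ ((1 + z) ^ (2 * (m - (n:ℝ))))⁻¹ :=
      inv_anti₀ (Real.rpow_pos_of_pos (by linarith) _) (rho_lower m α hα n hz0)
    have h5 : ((1 + z) ^ (2 * (m - (n:ℝ))))⁻¹ = (1 + z) ^ r := by
      rw [hr, Real.rpow_neg (by linarith)]
    calc R * (rho m α j z)⁻¹ ≤ (rho m α j z / rho m α n z) * (rho m α j z)⁻¹ := h2
      _ = (rho m α n z)⁻¹ := h3
      _ ≤ ((1 + z) ^ (2 * (m - (n:ℝ))))⁻¹ := h4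
      _ = (1 + z) ^ r := h5
  have hRB : R * B ≤ 1 / (2 * (m - (n:ℝ)) - 1) := by
    have h1 : R * B = ∫ z, R * (rho m α j z)⁻¹ ∂μ := (integral_const_mul R _).symm
    have h2 : ∫ z, R * (rho m α j z)⁻¹ ∂μ ≤ ∫ z in Set.Ioc (0:ℝ) y, (1 + z) ^ r :=
      setIntegral_mono_on (hinv_int.const_mul R) hbound_int measurableSet_Ioc hptwise
    have h3 : ∫ z in Set.Ioc (0:ℝ) y, (1 + z) ^ r = ((1+y) ^ (r+1) - 1) / (r+1) := by
      rw [← intervalIntegral.integral_of_le hy]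
      have hcomp := intervalIntegral.integral_comp_add_left (a := (0:ℝ)) (b := y)
        (fun u : ℝ => u ^ r) 1
      rw [hcomp]
      rw [integral_rpow (Or.inr ⟨hrlt.ne, by
        intro h
        rcases Set.mem_uIcc.mp h with ⟨h1', _⟩ | ⟨_, h2'⟩ <;> linarith⟩)]
      norm_num
    have h4 : ((1+y) ^ (r+1) - 1) / (r+1) ≤ 1 / (2 * (m - (n:ℝ)) - 1) := by
      have hre : r + 1 = -(2 * (m - (n:ℝ)) - 1) := by rw [hr]; ring
      have ht : (0:ℝ) ≤ (1+y) ^ (r+1) := Real.rpow_nonneg (by linarith) _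
      rw [hre] at ht ⊢
      rw [div_neg, ← neg_div]
      gcongr
      linarith
    calc R * B = ∫ z, R * (rho m α j z)⁻¹ ∂μ := h1
      _ ≤ ∫ z in Set.Ioc (0:ℝ) y, (1 + z) ^ r := h2
      _ = ((1+y) ^ (r+1) - 1) / (r+1) := h3
      _ ≤ 1 / (2 * (m - (n:ℝ)) - 1) := h4
  -- final assembly
  have hsqrtA' : A' ^ ((1:ℝ)/2) = Real.sqrt A' := (Real.sqrt_eq_rpow A').symm
  have hsqrtB : B ^ ((1:ℝ)/2) = Real.sqrt B := (Real.sqrt_eq_rpow B).symm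
  rw [hsqrtA', hsqrtB] at holder
  rw [intervalIntegral.integral_of_le hy]
  calc Real.sqrt R * ∫ z in Set.Ioc (0:ℝ) y, |f z|
      ≤ Real.sqrt R * (Real.sqrt A' * Real.sqrt B) :=
        mul_le_mul_of_nonneg_left holder (Real.sqrt_nonneg R)
    _ = Real.sqrt A' * (Real.sqrt R * Real.sqrt B) := by ring
    _ = Real.sqrt A' * Real.sqrt (R * B) := by rw [← Real.sqrt_mul hR0]
    _ ≤ Real.sqrt A * Real.sqrt (1 / (2 * (m - (n:ℝ)) - 1)) :=
        mul_le_mul (Real.sqrt_le_sqrt hA'A) (Real.sqrt_le_sqrt hRB)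
          (Real.sqrt_nonneg _) (Real.sqrt_nonneg _)
    _ = Real.sqrt (1 / (2 * (m - (n:ℝ)) - 1)) * Real.sqrt A := mul_comm _ _
end
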